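/- Let W₁ = U₁S₁V₁ᵀ and W₂ = U₂S₂V₂ᵀ be differentiable singular value decomposition paths of n×n real matrices (U_l, V_l orthogonal-valued, S_l diagonal-valued, all differentiable in t), evolving by Ẇ₁ = −W₂ᵀG and Ẇ₂ = −GW₁ᵀ for some matrix function G(t), and suppose the singular vector dynamics satisfy U̇₁ = U₁(H₁ ⊙ (U₁ᵀẆ₁V₁S₁ + S₁V₁ᵀẆ₁ᵀU₁)) and V̇₂ = V₂(H₂ ⊙ (V₂ᵀẆ₂ᵀU₂S₂ + S₂U₂ᵀẆ₂V₂)), where H_l has entries (H_l)_{kk'} = 1/((σ_l^k)² − (σ_l^{k'})²) for k ≠ k' and 0 on the diagonal, σ_l^k being the diagonal entries of S_l. Then the alignment matrix A := V₂ᵀU₁ evolves by Ȧ = −A ( H₁ ⊙ (AᵀF + FᵀA) ) + ( H₂ ⊙ (AFᵀ + FAᵀ) ) A, where F := S₂ U₂ᵀ G V₁ S₁. -/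

import Mathlib

open Matrix

lemma hadamard_neg' {n : ℕ} (P Q : Matrix (Fin n) (Fin n) ℝ) :
    P ⊙ (-Q) = -(P ⊙ Q) := by
  ext i j; simp [hadamard_apply]

lemma neg_hadamard' {n : ℕ} (P Q : Matrix (Fin n) (Fin n) ℝ) :
    (-P) ⊙ Q = -(P ⊙ Q) := by
  ext i j; simp [hadamard_apply]

lemma hadamard_transpose' {n : ℕ} (P Q : Matrix (Fin n) (Fin n) ℝ) :
    (P ⊙ Q)ᵀ = Pᵀ ⊙ Qᵀ := by
  ext i j; simp [hadamard_apply, transpose_apply]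

/-- **Lemma (alignment matrix dynamics).**
Let `W₁ = U₁ S₁ V₁ᵀ` and `W₂ = U₂ S₂ V₂ᵀ` be differentiable SVD paths evolving
by `Ẇ₁ = −W₂ᵀ G`, `Ẇ₂ = −G W₁ᵀ`, whose singular-vector dynamics satisfy
`U̇₁ = U₁ (H₁ ⊙ (U₁ᵀ Ẇ₁ V₁ S₁ + S₁ V₁ᵀ Ẇ₁ᵀ U₁))` and
`V̇₂ = V₂ (H₂ ⊙ (V₂ᵀ Ẇ₂ᵀ U₂ S₂ + S₂ U₂ᵀ Ẇ₂ V₂))`, where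
`(H_l)_{kk'} = 1/((σ_l^k)² − (σ_l^{k'})²)` off the diagonal and `0` on it.
Then the alignment matrix `A = V₂ᵀ U₁` evolves by
`Ȧ = −A (H₁ ⊙ (Aᵀ F + Fᵀ A)) + (H₂ ⊙ (A Fᵀ + F Aᵀ)) A` with
`F = S₂ U₂ᵀ G V₁ S₁`. -/
theorem alignment_matrix_dynamics (n : ℕ)
    (W₁ U₁ S₁ V₁ W₂ U₂ S₂ V₂ U₁' V₂' G : ℝ → Matrix (Fin n) (Fin n) ℝ)
    (hSVD₁ : ∀ t, W₁ t = U₁ t * S₁ t * (V₁ t)ᵀ)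
    (hSVD₂ : ∀ t, W₂ t = U₂ t * S₂ t * (V₂ t)ᵀ)
    (hU₁orth : ∀ t, (U₁ t)ᵀ * U₁ t = 1) (hV₁orth : ∀ t, (V₁ t)ᵀ * V₁ t = 1)
    (hU₂orth : ∀ t, (U₂ t)ᵀ * U₂ t = 1) (hV₂orth : ∀ t, (V₂ t)ᵀ * V₂ t = 1)
    (hS₁diag : ∀ t k k', k ≠ k' → S₁ t k k' = 0)
    (hS₂diag : ∀ t k k', k ≠ k' → S₂ t k k' = 0)
    (H₁ H₂ : ℝ → Matrix (Fin n) (Fin n) ℝ)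
    (hH₁ : ∀ t, H₁ t = Matrix.of fun k k' =>
      if k = k' then 0 else 1 / ((S₁ t k k) ^ 2 - (S₁ t k' k') ^ 2))
    (hH₂ : ∀ t, H₂ t = Matrix.of fun k k' =>
      if k = k' then 0 else 1 / ((S₂ t k k) ^ 2 - (S₂ t k' k') ^ 2))
    -- entrywise differentiability of the singular-vector paths
    (hU₁ : ∀ t i j, HasDerivAt (fun s => U₁ s i j) (U₁' t i j) t)
    (hV₂ : ∀ t i j, HasDerivAt (fun s => V₂ s i j) (V₂' t i j) t)
    -- singular-vector dynamics, with `Ẇ₁ = −W₂ᵀ G` and `Ẇ₂ = −G W₁ᵀ`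
    (hU₁dyn : ∀ t, U₁' t = U₁ t *
      (H₁ t ⊙ ((U₁ t)ᵀ * (-(W₂ t)ᵀ * G t) * V₁ t * S₁ t +
               S₁ t * (V₁ t)ᵀ * (-(W₂ t)ᵀ * G t)ᵀ * U₁ t)))
    (hV₂dyn : ∀ t, V₂' t = V₂ t *
      (H₂ t ⊙ ((V₂ t)ᵀ * (-(G t) * (W₁ t)ᵀ)ᵀ * U₂ t * S₂ t +
               S₂ t * (U₂ t)ᵀ * (-(G t) * (W₁ t)ᵀ) * V₂ t)))
    (A F : ℝ → Matrix (Fin n) (Fin n) ℝ)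
    (hA : ∀ t, A t = (V₂ t)ᵀ * U₁ t)
    (hF : ∀ t, F t = S₂ t * (U₂ t)ᵀ * G t * V₁ t * S₁ t) :
    ∀ t i j, HasDerivAt (fun s => A s i j)
      ((-(A t) * (H₁ t ⊙ ((A t)ᵀ * F t + (F t)ᵀ * A t)) +
        (H₂ t ⊙ (A t * (F t)ᵀ + F t * (A t)ᵀ)) * A t) i j) t := by
  intro t i j
  -- diagonal matrices are symmetric
  have hS₁T : (S₁ t)ᵀ = S₁ t := by
    ext k k'
    rcases eq_or_ne k k' with h | h
    · subst h; rfl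
    · rw [transpose_apply, hS₁diag t k' k (Ne.symm h), hS₁diag t k k' h]
  have hS₂T : (S₂ t)ᵀ = S₂ t := by
    ext k k'
    rcases eq_or_ne k k' with h | h
    · subst h; rfl
    · rw [transpose_apply, hS₂diag t k' k (Ne.symm h), hS₂diag t k k' h]
  -- H₂ is antisymmetric
  have hH₂T : (H₂ t)ᵀ = -(H₂ t) := by
    rw [hH₂]
    ext k k'
    rcases eq_or_ne k k' with h | h
    · subst h; simp
    · simp only [transpose_apply, Matrix.neg_apply, Matrix.of_apply,
        if_neg h, if_neg (Ne.symm h)]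
      rw [← neg_sub, one_div, one_div, inv_neg]
  -- abbreviations
  set X₁ : Matrix (Fin n) (Fin n) ℝ := (A t)ᵀ * F t + (F t)ᵀ * A t with hX₁
  set X₂ : Matrix (Fin n) (Fin n) ℝ := A t * (F t)ᵀ + F t * (A t)ᵀ with hX₂
  -- compute U₁'
  have e1 : (U₁ t)ᵀ * (-(W₂ t)ᵀ * G t) * V₁ t * S₁ t = -((A t)ᵀ * F t) := by
    rw [hSVD₂, hA, hF]
    simp only [transpose_mul, transpose_transpose, hS₂T, Matrix.neg_mul,
      Matrix.mul_neg, Matrix.mul_assoc]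
  have e2 : S₁ t * (V₁ t)ᵀ * (-(W₂ t)ᵀ * G t)ᵀ * U₁ t = -((F t)ᵀ * A t) := by
    rw [hSVD₂, hA, hF]
    simp only [transpose_mul, transpose_neg, transpose_transpose, hS₁T, hS₂T,
      Matrix.neg_mul, Matrix.mul_neg, Matrix.mul_assoc]
  have hU₁' : U₁' t = -(U₁ t * (H₁ t ⊙ X₁)) := by
    rw [hU₁dyn, e1, e2, ← neg_add, hadamard_neg', Matrix.mul_neg, hX₁]
  -- compute V₂'
  have e3 : (V₂ t)ᵀ * (-(G t) * (W₁ t)ᵀ)ᵀ * U₂ t * S₂ t = -(A t * (F t)ᵀ) := by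
    rw [hSVD₁, hA, hF]
    simp only [transpose_mul, transpose_neg, transpose_transpose, hS₁T, hS₂T,
      Matrix.neg_mul, Matrix.mul_neg, Matrix.mul_assoc]
  have e4 : S₂ t * (U₂ t)ᵀ * (-(G t) * (W₁ t)ᵀ) * V₂ t = -(F t * (A t)ᵀ) := by
    rw [hSVD₁, hA, hF]
    simp only [transpose_mul, transpose_transpose, hS₁T,
      Matrix.neg_mul, Matrix.mul_neg, Matrix.mul_assoc]
  have hV₂' : V₂' t = -(V₂ t * (H₂ t ⊙ X₂)) := by
    rw [hV₂dyn, e3, e4, ← neg_add, hadamard_neg', Matrix.mul_neg, hX₂]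
  -- X₂ is symmetric
  have hX₂T : X₂ᵀ = X₂ := by
    rw [hX₂, transpose_add, transpose_mul, transpose_mul, transpose_transpose,
      transpose_transpose, add_comm]
  -- the matrix identity for the derivative
  have key : (V₂' t)ᵀ * U₁ t + (V₂ t)ᵀ * U₁' t =
      -(A t) * (H₁ t ⊙ X₁) + (H₂ t ⊙ X₂) * A t := by
    rw [hU₁', hV₂', transpose_neg, transpose_mul, hadamard_transpose', hH₂T, hX₂T,
      neg_hadamard', hA]
    simp only [Matrix.neg_mul, Matrix.mul_neg, neg_neg, Matrix.mul_assoc]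
    exact add_comm _ _
  rw [← key]
  -- entrywise product rule
  have hfun : (fun s => A s i j) = fun s => ∑ k, V₂ s k i * U₁ s k j := by
    funext s
    rw [hA]
    simp [Matrix.mul_apply, transpose_apply]
  rw [hfun]
  have : HasDerivAt (fun s => ∑ k, V₂ s k i * U₁ s k j)
      (∑ k, (V₂' t k i * U₁ t k j + V₂ t k i * U₁' t k j)) t :=
    HasDerivAt.fun_sum fun k _ => (hV₂ t k i).mul (hU₁ t k j)
  convert this using 1
  simp [Matrix.add_apply, Matrix.mul_apply, transpose_apply, Finset.sum_add_distrib]
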